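/- Let q ≥ 2, t ≥ 1, R ≥ 1 and s ≥ 0 be integers. Let S₁, …, S_s be pairwise disjoint subsets of [R] with |S_i| ≤ t for each i, and let c₁, …, c_s : [R] → [q] be arbitrary strings. Let I ⊆ [q]^R be a set of strings such that for every b ∈ I and every i ∈ [s] there exists r ∈ S_i with b(r) = c_i(r). Then |I| ≤ (1 − ((q − 1)/q)^t)^s · q^R (an inequality of real numbers). -/

import Mathlib

open Finset

/-- Independence of events depending on disjoint coordinate sets. -/
lemma indep_card {R q : ℕ} (T : Finset (Fin R)) (X Y : Finset (Fin R → Fin q))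
    (hX : ∀ b b' : Fin R → Fin q, (∀ r, r ∉ T → b r = b' r) → b ∈ X → b' ∈ X)
    (hY : ∀ b b' : Fin R → Fin q, (∀ r, r ∈ T → b r = b' r) → b ∈ Y → b' ∈ Y) :
    (X ∩ Y).card * q ^ R = X.card * Y.card := by
  have key : ((X ∩ Y) ×ˢ (Finset.univ : Finset (Fin R → Fin q))).card = (X ×ˢ Y).card := by
    apply Finset.card_nbij'
      (fun p => (fun r => if r ∈ T then p.2 r else p.1 r,
                 fun r => if r ∈ T then p.1 r else p.2 r))
      (fun p => (fun r => if r ∈ T then p.2 r else p.1 r,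
                 fun r => if r ∈ T then p.1 r else p.2 r))
    · intro p hp
      simp only [Finset.mem_coe, Finset.mem_product, Finset.mem_inter] at hp ⊢
      refine ⟨hX p.1 _ (fun r hr => by simp [hr]) hp.1.1,
              hY p.1 _ (fun r hr => by simp [hr]) hp.1.2⟩
    · intro p hp
      simp only [Finset.mem_coe, Finset.mem_product, Finset.mem_inter] at hp ⊢
      refine ⟨⟨hX p.1 _ (fun r hr => by simp [hr]) hp.1,
              hY p.2 _ (fun r hr => by simp [hr]) hp.2⟩, Finset.mem_univ _⟩
    · intro p hp
      ext r <;> by_cases hr : r ∈ T <;> simp [hr]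
    · intro p hp
      ext r <;> by_cases hr : r ∈ T <;> simp [hr]
  have hcard : (Finset.univ : Finset (Fin R → Fin q)).card = q ^ R := by
    simp [Finset.card_univ]
  rw [Finset.card_product, Finset.card_product, hcard] at key
  exact key

lemma avoid_card {R q : ℕ} (T : Finset (Fin R)) (c : Fin R → Fin q) :
    (Finset.univ.filter (fun b : Fin R → Fin q => ∀ r ∈ T, b r ≠ c r)).card
      = (q - 1) ^ T.card * q ^ (R - T.card) := by
  have : (Finset.univ.filter (fun b : Fin R → Fin q => ∀ r ∈ T, b r ≠ c r))
      = Fintype.piFinset (fun r => if r ∈ T then {c r}ᶜ else Finset.univ) := by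
    ext b
    simp only [Finset.mem_filter, Finset.mem_univ, true_and, Fintype.mem_piFinset]
    constructor
    · intro h r
      by_cases hr : r ∈ T <;> simp [hr, h r]
    · intro h r hr
      have := h r
      simpa [hr] using this
  rw [this, Fintype.card_piFinset]
  have : ∀ r : Fin R, (if r ∈ T then ({c r}ᶜ : Finset (Fin q)) else Finset.univ).card
      = if r ∈ T then q - 1 else q := by
    intro r
    by_cases hr : r ∈ T <;> simp [hr, Finset.card_compl]
  simp only [this]
  rw [Finset.prod_ite, Finset.prod_const, Finset.prod_const]
  have h1 : (Finset.univ.filter (fun x : Fin R => x ∈ T)) = T := by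
    simp
  have h2 : (Finset.univ.filter (fun x : Fin R => ¬ x ∈ T)).card = R - T.card := by
    have := Finset.card_filter_add_card_filter_not
      (s := (Finset.univ : Finset (Fin R))) (p := (· ∈ T))
    simp only [Finset.card_univ, Fintype.card_fin] at this
    rw [h1] at this
    omega
  rw [h1, h2]

lemma aux_counting (q t R : ℕ) (hq : 2 ≤ q) :
    ∀ (s : ℕ) (S : Fin s → Finset (Fin R)),
      (∀ i j : Fin s, i ≠ j → Disjoint (S i) (S j)) →
      (∀ i, (S i).card ≤ t) →
      ∀ c : Fin s → Fin R → Fin q,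
      ((Finset.univ.filter
          (fun b : Fin R → Fin q => ∀ i, ∃ r ∈ S i, b r = c i r)).card : ℝ)
        ≤ (1 - (((q : ℝ) - 1) / q) ^ t) ^ s * (q : ℝ) ^ R := by
  have hq0 : (0:ℝ) < q := by positivity
  have hq1 : (1:ℝ) ≤ q := by exact_mod_cast Nat.one_le_of_lt hq
  set ρ : ℝ := (((q : ℝ) - 1) / q) with hρ
  have hρ0 : 0 ≤ ρ := by
    apply div_nonneg _ (le_of_lt hq0); linarith
  have hρ1 : ρ ≤ 1 := by
    rw [hρ, div_le_one hq0]; linarith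
  have hε0 : 0 ≤ 1 - ρ ^ t := by
    have := pow_le_one₀ hρ0 hρ1 (n := t); linarith
  intro s
  induction s with
  | zero =>
    intro S _ _ c
    simp only [pow_zero, one_mul]
    have : (Finset.univ.filter
        (fun b : Fin R → Fin q => ∀ i : Fin 0, ∃ r ∈ S i, b r = c i r)).card
        ≤ q ^ R := by
      calc _ ≤ (Finset.univ : Finset (Fin R → Fin q)).card := Finset.card_filter_le _ _
      _ = q ^ R := by simp [Finset.card_univ]
    exact_mod_cast this
  | succ n ih =>
    intro S hdisj hsize c
    set T := S (Fin.last n) with hT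
    set X := Finset.univ.filter
      (fun b : Fin R → Fin q => ∀ i : Fin n, ∃ r ∈ S i.castSucc, b r = c i.castSucc r) with hX
    set Y := Finset.univ.filter
      (fun b : Fin R → Fin q => ∃ r ∈ T, b r = c (Fin.last n) r) with hY
    have hsub : Finset.univ.filter
        (fun b : Fin R → Fin q => ∀ i, ∃ r ∈ S i, b r = c i r) ⊆ X ∩ Y := by
      intro b hb
      simp only [Finset.mem_filter, Finset.mem_univ, true_and] at hb
      simp only [Finset.mem_inter, hX, hY, Finset.mem_filter, Finset.mem_univ, true_and]
      exact ⟨fun i => hb i.castSucc, hb (Fin.last n)⟩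
    have hXinv : ∀ b b' : Fin R → Fin q, (∀ r, r ∉ T → b r = b' r) → b ∈ X → b' ∈ X := by
      intro b b' hagree hb
      simp only [hX, Finset.mem_filter, Finset.mem_univ, true_and] at hb ⊢
      intro i
      obtain ⟨r, hr, hbr⟩ := hb i
      have hrT : r ∉ T := by
        have hne : (i.castSucc : Fin (n+1)) ≠ Fin.last n := by
          simp [Fin.ext_iff]; omega
        exact Finset.disjoint_left.mp (hdisj i.castSucc (Fin.last n) hne) hr
      exact ⟨r, hr, by rw [← hagree r hrT]; exact hbr⟩
    have hYinv : ∀ b b' : Fin R → Fin q, (∀ r, r ∈ T → b r = b' r) → b ∈ Y → b' ∈ Y := by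
      intro b b' hagree hb
      simp only [hY, Finset.mem_filter, Finset.mem_univ, true_and] at hb ⊢
      obtain ⟨r, hr, hbr⟩ := hb
      exact ⟨r, hr, by rw [← hagree r hr]; exact hbr⟩
    have hmul := indep_card T X Y hXinv hYinv
    have hXle : (X.card : ℝ) ≤ (1 - ρ ^ t) ^ n * (q : ℝ) ^ R := by
      apply ih (fun i => S i.castSucc)
      · intro i j hij
        exact hdisj i.castSucc j.castSucc (by simpa [Fin.ext_iff] using hij)
      · intro i; exact hsize i.castSucc
    -- bound on Y
    set k := T.card with hk
    have hkt : k ≤ t := hsize (Fin.last n)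
    have hkR : k ≤ R := by
      have := Finset.card_le_card (Finset.subset_univ T)
      simpa using this
    have hsplit : Y.card + (q - 1) ^ k * q ^ (R - k) = q ^ R := by
      rw [← avoid_card T (c (Fin.last n))]
      have heq : Finset.univ.filter (fun b : Fin R → Fin q => ∀ r ∈ T, b r ≠ c (Fin.last n) r)
          = Finset.univ.filter
            (fun b : Fin R → Fin q => ¬ ∃ r ∈ T, b r = c (Fin.last n) r) := by
        apply Finset.filter_congr; intro b _; push_neg; rfl
      rw [heq]
      have := Finset.card_filter_add_card_filter_not
        (s := (Finset.univ : Finset (Fin R → Fin q)))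
        (p := fun b : Fin R → Fin q => ∃ r ∈ T, b r = c (Fin.last n) r)
      simpa [Finset.card_univ] using this
    have hcastsub : ((q - 1 : ℕ) : ℝ) = (q : ℝ) - 1 := by
      have : 1 ≤ q := by omega
      push_cast [this]; ring
    have hsplitR : (Y.card : ℝ) + ((q : ℝ) - 1) ^ k * (q : ℝ) ^ (R - k) = (q : ℝ) ^ R := by
      have h := congrArg (Nat.cast : ℕ → ℝ) hsplit
      push_cast [Nat.cast_sub (show 1 ≤ q by omega)] at h
      exact h
    have hkey : ((q : ℝ) - 1) ^ k * (q : ℝ) ^ (R - k) = ρ ^ k * (q : ℝ) ^ R := by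
      have hqR : (q : ℝ) ^ R = (q : ℝ) ^ k * (q : ℝ) ^ (R - k) := by
        rw [← pow_add]; congr 1; omega
      rw [hqR, hρ, div_pow]
      field_simp
    have hρtk : ρ ^ t ≤ ρ ^ k := pow_le_pow_of_le_one hρ0 hρ1 hkt
    have hYle : (Y.card : ℝ) ≤ (1 - ρ ^ t) * (q : ℝ) ^ R := by
      rw [hkey] at hsplitR
      have hqRpos : (0:ℝ) < (q : ℝ) ^ R := by positivity
      nlinarith [mul_le_mul_of_nonneg_right hρtk (le_of_lt hqRpos)]
    have hmulR : ((X ∩ Y).card : ℝ) * (q : ℝ) ^ R = (X.card : ℝ) * Y.card := by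
      exact_mod_cast congrArg (Nat.cast : ℕ → ℝ) hmul
    have hqRpos : (0:ℝ) < (q : ℝ) ^ R := by positivity
    have hfin : ((X ∩ Y).card : ℝ) ≤ (1 - ρ ^ t) ^ (n + 1) * (q : ℝ) ^ R := by
      have h2 : ((X ∩ Y).card : ℝ) * (q : ℝ) ^ R
          ≤ ((1 - ρ ^ t) ^ (n + 1) * (q : ℝ) ^ R) * (q : ℝ) ^ R := by
        rw [hmulR]
        calc (X.card : ℝ) * Y.card
            ≤ ((1 - ρ ^ t) ^ n * (q : ℝ) ^ R) * ((1 - ρ ^ t) * (q : ℝ) ^ R) := by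
              apply mul_le_mul hXle hYle (Nat.cast_nonneg _) (by positivity)
          _ = ((1 - ρ ^ t) ^ (n + 1) * (q : ℝ) ^ R) * (q : ℝ) ^ R := by ring
      exact le_of_mul_le_mul_right h2 hqRpos
    calc ((Finset.univ.filter
          (fun b : Fin R → Fin q => ∀ i, ∃ r ∈ S i, b r = c i r)).card : ℝ)
        ≤ ((X ∩ Y).card : ℝ) := by exact_mod_cast Finset.card_le_card hsub
      _ ≤ _ := hfin

theorem disjointBlocks_counting (q t R s : ℕ) (hq : 2 ≤ q) (ht : 1 ≤ t)
    (hR : 1 ≤ R)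
    (S : Fin s → Finset (Fin R))
    (hdisj : ∀ i j : Fin s, i ≠ j → Disjoint (S i) (S j))
    (hsize : ∀ i, (S i).card ≤ t)
    (c : Fin s → Fin R → Fin q)
    (I : Finset (Fin R → Fin q))
    (hI : ∀ b ∈ I, ∀ i : Fin s, ∃ r ∈ S i, b r = c i r) :
    (I.card : ℝ) ≤ (1 - (((q : ℝ) - 1) / q) ^ t) ^ s * (q : ℝ) ^ R := by
  have hsub : I ⊆ Finset.univ.filter
      (fun b : Fin R → Fin q => ∀ i, ∃ r ∈ S i, b r = c i r) := by
    intro b hb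
    simp only [Finset.mem_filter, Finset.mem_univ, true_and]
    exact hI b hb
  calc (I.card : ℝ) ≤ _ := by exact_mod_cast Finset.card_le_card hsub
    _ ≤ _ := aux_counting q t R hq s S hdisj hsize c
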